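/- Let T be a tree (with no isolated vertices), let v be a vertex of T, and suppose mttr(v, T) = t. Then for every i with 1 ≤ i ≤ t, there exists a modified-total transitive partition {V_1, V_2, ..., V_i} of T of size i such that v ∈ V_i. -/
import Mathlib


/-- A modified-total transitive partition of `G` into `k` parts: the parts are nonempty,
they partition the vertex set, and `V_i` m-totally dominates `V_j` for all `i < j`
(i.e. every vertex of `V_i ∪ V_j` is adjacent to some vertex of `V_i`). -/
def MTTPartition {V : Type*} (G : SimpleGraph V) (k : ℕ) (P : Fin k → Set V) : Prop :=
  (∀ i, (P i).Nonempty) ∧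
  (∀ v : V, ∃! i, v ∈ P i) ∧
  (∀ i j : Fin k, i < j → ∀ v ∈ P i ∪ P j, ∃ u ∈ P i, G.Adj u v)

/-- If `T` is a tree, `v` a vertex of `T`, and the modified-total transitive number of
`v` in `T` is `t` (the largest `p` such that `v ∈ V_p` in some modified-total transitive
partition of `T`), then for every `1 ≤ i ≤ t` there is a modified-total transitive
partition `{V_1, …, V_i}` of `T` of size `i` with `v ∈ V_i`. -/
theorem stmt19 {V : Type*} [Fintype V] (T : SimpleGraph V) (hT : T.IsTree)
    (hiso : ∀ v : V, ∃ u : V, T.Adj v u)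
    (v : V) (t : ℕ)
    (ht : IsGreatest {p : ℕ | ∃ k : ℕ, ∃ P : Fin k → Set V, MTTPartition T k P ∧
            ∃ i : Fin k, (i : ℕ) + 1 = p ∧ v ∈ P i} t) :
    ∀ i : ℕ, ∀ hi1 : 1 ≤ i, i ≤ t →
      ∃ P : Fin i → Set V, MTTPartition T i P ∧ v ∈ P ⟨i - 1, by omega⟩ := by
  intro i hi1 hit
  obtain ⟨⟨k, P, ⟨hne, huniq, hdom⟩, j, hj, hvj⟩, hmax⟩ := ht
  have hjk := j.isLt
  have hik : i ≤ k := by omega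
  refine ⟨fun m => {w | ∃ c : Fin k, min (c : ℕ) (i - 1) = (m : ℕ) ∧ w ∈ P c},
    ⟨?_, ?_, ?_⟩, ?_⟩
  · -- nonempty
    intro m
    have hm := m.isLt
    obtain ⟨w, hw⟩ := hne ⟨(m : ℕ), by omega⟩
    exact ⟨w, ⟨(m : ℕ), by omega⟩, by simp; omega, hw⟩
  · -- unique part
    intro w
    obtain ⟨c, hc, hcu⟩ := huniq w
    refine ⟨⟨min (c : ℕ) (i - 1), by omega⟩, ⟨c, rfl, hc⟩, ?_⟩
    rintro m ⟨c', hc', hwc'⟩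
    have : c' = c := hcu c' hwc'
    subst this
    exact Fin.ext hc'.symm
  · -- domination
    intro a b hab w hw
    have hab' : (a : ℕ) < (b : ℕ) := hab
    have hb := b.isLt
    have hai : (a : ℕ) < i - 1 := by omega
    set ca : Fin k := ⟨(a : ℕ), by omega⟩ with hca
    have hfa : min ((ca : Fin k) : ℕ) (i - 1) = (a : ℕ) := by simp [hca]; omega
    have key : ∃ c : Fin k, (a : ℕ) ≤ (c : ℕ) ∧ w ∈ P c := by
      rcases hw with ⟨c, hc, hwc⟩ | ⟨c, hc, hwc⟩
      · exact ⟨c, by omega, hwc⟩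
      · exact ⟨c, by omega, hwc⟩
    obtain ⟨c, hac, hwc⟩ := key
    rcases eq_or_lt_of_le hac with heq | hlt
    · -- w ∈ P ca; use pair (ca, ca+1)
      have hcca : c = ca := Fin.ext (by omega)
      obtain ⟨u, hu, hadj⟩ := hdom ca ⟨(a : ℕ) + 1, by omega⟩ (by simp [hca, Fin.lt_def])
        w (Or.inl (hcca ▸ hwc))
      exact ⟨u, ⟨ca, hfa, hu⟩, hadj⟩
    · obtain ⟨u, hu, hadj⟩ := hdom ca c (by simp [hca, Fin.lt_def]; omega) w (Or.inr hwc)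
      exact ⟨u, ⟨ca, hfa, hu⟩, hadj⟩
  · -- v in the last part
    exact ⟨j, by simp; omega, hvj⟩
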